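/- Let p be a prime and α = (a_1,…,a_k) ∈ F_p^k. Suppose there is a positive integer t ≤ k/2 such that a_t ≠ a_{t+1} and a_{t+1} = a_{t+2} = ⋯ = a_k. Then f_α(p, n) ≤ (1 + o(1))·(t!·n)^{1/t}; that is, limsup_{n→∞} f_α(p, n)/(t!·n)^{1/t} ≤ 1. -/

import Mathlib

open Filter

/-- A family `F` of subsets of `[n]` (modeled as `Fin n`) is `α`-intersecting modulo `p` for a
vector `α ∈ F_p^k` if for each `ℓ ∈ [k]`, any `ℓ` pairwise distinct members of `F`
have an intersection of cardinality congruent to `a_ℓ` modulo `p`.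
Here `α ⟨ℓ-1,_⟩` denotes the coordinate `a_ℓ` (0-based indexing of a 1-based vector). -/
def IsIntersectingP (p k n : ℕ) (α : Fin k → ZMod p) (F : Finset (Finset (Fin n))) : Prop :=
  ∀ (ℓ : Fin k) (S : Finset (Finset (Fin n))), S ⊆ F → S.card = ℓ.1 + 1 →
    ((S.inf id).card : ZMod p) = α ℓ

/-- `fMaxP p k n α` is the maximum size of an `α`-intersecting (mod `p`) family of
subsets of `[n]`. -/
noncomputable def fMaxP (p k n : ℕ) (α : Fin k → ZMod p) : ℕ :=
  sSup {m | ∃ F : Finset (Finset (Fin n)), IsIntersectingP p k n α F ∧ F.card = m}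

/-- The product of the indicator functions of `A` and `B` sums to `|A ∩ B|` over `ZMod p`. -/
lemma aux_indicator_dot (p n : ℕ) (A B : Finset (Fin n)) :
    ∑ i : Fin n, (if i ∈ A then (1:ZMod p) else 0) * (if i ∈ B then 1 else 0)
      = ((A ∩ B).card : ZMod p) := by
  have h : ∀ i : Fin n, (if i ∈ A then (1:ZMod p) else 0) * (if i ∈ B then 1 else 0)
      = if i ∈ A ∩ B then 1 else 0 := by
    intro i; by_cases hA : i ∈ A <;> by_cases hB : i ∈ B <;> simp [hA, hB]
  rw [Finset.sum_congr rfl (fun i _ => h i), Finset.sum_ite_mem]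
  simp

/-- Modular linear algebra bound: a family of subsets of `[n]` with all cardinalities `≡ a`
and pairwise intersection cardinalities `≡ b ≠ a` (mod `p`) has size at most `n + 1`. -/
lemma aux_modlin_card_le (p n : ℕ) [Fact p.Prime] (a b : ZMod p) (hab : a ≠ b)
    (G : Finset (Finset (Fin n)))
    (hG1 : ∀ A ∈ G, ((A.card : ZMod p)) = a)
    (hG2 : ∀ A ∈ G, ∀ B ∈ G, A ≠ B → (((A ∩ B).card : ZMod p)) = b) :
    G.card ≤ n + 1 := by
  classical
  set w : G → (Fin n → ZMod p) × ZMod p :=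
    fun A => (fun i => if i ∈ (A : Finset (Fin n)) then 1 else 0, 1) with hw
  have hli : LinearIndependent (ZMod p) w := by
    rw [Fintype.linearIndependent_iff]
    intro c hc B
    have h1 : ∀ i, ∑ A : G, c A * (if i ∈ (A:Finset (Fin n)) then (1:ZMod p) else 0) = 0 := by
      intro i
      have := congrFun (congrArg Prod.fst hc) i
      simpa [hw, Prod.fst_sum, Finset.sum_apply, mul_ite, mul_one, mul_zero] using this
    have h2 : ∑ A : G, c A = 0 := by
      have := congrArg Prod.snd hc
      simpa [hw, Prod.snd_sum] using this
    have h3 : ∑ A : G, c A * (((A:Finset (Fin n)) ∩ (B:Finset (Fin n))).card : ZMod p) = 0 := by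
      calc ∑ A : G, c A * (((A:Finset (Fin n)) ∩ (B:Finset (Fin n))).card : ZMod p)
          = ∑ A : G, ∑ i : Fin n, (c A * (if i ∈ (A:Finset (Fin n)) then (1:ZMod p) else 0)) *
              (if i ∈ (B:Finset (Fin n)) then 1 else 0) := by
            refine Finset.sum_congr rfl fun A _ => ?_
            rw [← aux_indicator_dot p n, Finset.mul_sum]
            exact Finset.sum_congr rfl fun i _ => by ring
        _ = ∑ i : Fin n, (∑ A : G, c A * (if i ∈ (A:Finset (Fin n)) then (1:ZMod p) else 0)) *
              (if i ∈ (B:Finset (Fin n)) then 1 else 0) := by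
            rw [Finset.sum_comm]
            exact Finset.sum_congr rfl fun i _ => (Finset.sum_mul _ _ _).symm
        _ = 0 := Finset.sum_eq_zero fun i _ => by rw [h1 i, zero_mul]
    have h4 : ∑ A : G, c A * (((A:Finset (Fin n)) ∩ (B:Finset (Fin n))).card : ZMod p)
        = c B * a + ∑ A ∈ (Finset.univ.erase B), c A * b := by
      rw [← Finset.add_sum_erase _ _ (Finset.mem_univ B)]
      congr 1
      · rw [Finset.inter_self, hG1 _ B.2]
      · refine Finset.sum_congr rfl fun A hA => ?_
        rw [hG2 _ A.2 _ B.2 (fun h => (Finset.mem_erase.mp hA).1 (Subtype.ext h))]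
    have h5 : ∑ A ∈ (Finset.univ.erase B), c A = - c B := by
      have := Finset.add_sum_erase Finset.univ c (Finset.mem_univ B)
      rw [h2] at this
      linear_combination this
    rw [h4, ← Finset.sum_mul, h5] at h3
    have : c B * (a - b) = 0 := by linear_combination h3
    rcases mul_eq_zero.mp this with h | h
    · exact h
    · exact absurd (sub_eq_zero.mp h) hab
  have hcard := hli.fintype_card_le_finrank
  simpa [Module.finrank_prod, Module.finrank_pi] using hcard

/-- Key combinatorial bound: for an `α`-intersecting family `F` as in the theorem,
`C(|F|, t) ≤ n + 1`. -/
lemma aux_choose_card_le (p k n t : ℕ) [Fact p.Prime] (ht : 1 ≤ t) (hk : 2 * t ≤ k)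
    (α : Fin k → ZMod p)
    (hne : α ⟨t - 1, by omega⟩ ≠ α ⟨t, by omega⟩)
    (hconst : ∀ i : Fin k, t ≤ i.1 → α i = α ⟨t, by omega⟩)
    (F : Finset (Finset (Fin n))) (hF : IsIntersectingP p k n α F) :
    (F.card).choose t ≤ n + 1 := by
  classical
  set a : ZMod p := α ⟨t - 1, by omega⟩
  set b : ZMod p := α ⟨t, by omega⟩
  have fact1 : ∀ T ∈ F.powersetCard t, (((T.inf id).card : ZMod p)) = a := by
    intro T hT
    rw [Finset.mem_powersetCard] at hT
    exact hF ⟨t - 1, by omega⟩ T hT.1 (by simp [hT.2]; omega)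
  have fact2 : ∀ T ∈ F.powersetCard t, ∀ T' ∈ F.powersetCard t, T ≠ T' →
      ((((T.inf id) ∩ (T'.inf id)).card : ZMod p)) = b := by
    intro T hT T' hT' hne'
    rw [Finset.mem_powersetCard] at hT hT'
    have hsub : T ∪ T' ⊆ F := Finset.union_subset hT.1 hT'.1
    have hlt : t < (T ∪ T').card := by
      rw [← hT.2]
      refine Finset.card_lt_card ?_
      refine Finset.ssubset_iff_subset_ne.mpr ⟨Finset.subset_union_left, fun h => hne' ?_⟩
      have : T' ⊆ T := h ▸ Finset.subset_union_right
      exact (Finset.eq_of_subset_of_card_le this (by rw [hT.2, hT'.2])).symm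
    have hle : (T ∪ T').card ≤ 2 * t := by
      have := Finset.card_union_le T T'
      omega
    have hcard : (T ∪ T').card - 1 < k := by omega
    have := hF ⟨(T ∪ T').card - 1, hcard⟩ (T ∪ T') hsub (by simp; omega)
    rw [hconst ⟨(T ∪ T').card - 1, hcard⟩ (by simp; omega)] at this
    rw [← this, Finset.inf_union]
    rfl
  have hinj : Set.InjOn (fun T : Finset (Finset (Fin n)) => T.inf id) (F.powersetCard t) := by
    intro T hT T' hT' heq
    by_contra hne'
    have h1 := fact1 T hT
    have h2 := fact2 T hT T' hT' hne'
    simp only at heq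
    rw [← heq, Finset.inter_self] at h2
    exact hne (h1.symm.trans h2)
  set G : Finset (Finset (Fin n)) := (F.powersetCard t).image (fun T => T.inf id) with hG
  have hGcard : G.card = (F.card).choose t := by
    rw [hG, Finset.card_image_of_injOn hinj, Finset.card_powersetCard]
  rw [← hGcard]
  refine aux_modlin_card_le p n a b hne G ?_ ?_
  · intro A hA
    obtain ⟨T, hT, rfl⟩ := Finset.mem_image.mp hA
    exact fact1 T hT
  · intro A hA B hB hAB
    obtain ⟨T, hT, rfl⟩ := Finset.mem_image.mp hA
    obtain ⟨T', hT', rfl⟩ := Finset.mem_image.mp hB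
    exact fact2 T hT T' hT' (fun h => hAB (by rw [h]))

lemma aux_nat_bound (t m n : ℕ) (ht : 1 ≤ t) (h : m.choose t ≤ n + 1) :
    m ≤ t.factorial * (n + 1) + t := by
  have h1 : m + 1 - t ≤ (m + 1 - t) ^ t := Nat.le_self_pow (by omega) _
  have h2 : (m + 1 - t) ^ t ≤ t.factorial * (n + 1) := by
    calc (m + 1 - t) ^ t ≤ m.descFactorial t := Nat.pow_sub_le_descFactorial m t
      _ = t.factorial * m.choose t := Nat.descFactorial_eq_factorial_mul_choose m t
      _ ≤ t.factorial * (n + 1) := Nat.mul_le_mul_left _ h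
  omega

lemma aux_real_bound (t m n : ℕ) (ht : 1 ≤ t) (h : m.choose t ≤ n + 1) :
    (m : ℝ) ≤ ((t.factorial * (n+1) : ℕ) : ℝ) ^ ((1:ℝ)/t) + (t - 1 : ℕ) := by
  have hdesc : (m + 1 - t) ^ t ≤ t.factorial * (n + 1) := by
    calc (m + 1 - t) ^ t ≤ m.descFactorial t := Nat.pow_sub_le_descFactorial m t
      _ = t.factorial * m.choose t := Nat.descFactorial_eq_factorial_mul_choose m t
      _ ≤ t.factorial * (n + 1) := Nat.mul_le_mul_left _ h
  have hc : ((m + 1 - t : ℕ) : ℝ) ≤ ((t.factorial * (n+1) : ℕ) : ℝ) ^ ((1:ℝ)/t) := by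
    have h1 : ((m + 1 - t : ℕ) : ℝ) = (((m + 1 - t : ℕ) : ℝ) ^ (t:ℝ)) ^ ((1:ℝ)/t) := by
      rw [← Real.rpow_mul (Nat.cast_nonneg _)]
      rw [mul_one_div, div_self (by positivity : (t:ℝ) ≠ 0), Real.rpow_one]
    rw [h1]
    apply Real.rpow_le_rpow (by positivity) _ (by positivity)
    rw [Real.rpow_natCast]
    exact_mod_cast (by exact_mod_cast hdesc : (((m+1-t)^t : ℕ):ℝ) ≤ ((t.factorial * (n+1) : ℕ):ℝ))
  have : (m:ℝ) ≤ ((m + 1 - t : ℕ) : ℝ) + ((t - 1 : ℕ) : ℝ) := by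
    have : m ≤ (m + 1 - t) + (t - 1) := by omega
    exact_mod_cast this
  linarith

lemma aux_tendsto_bound (t : ℕ) (ht : 1 ≤ t) :
    Tendsto (fun n : ℕ => (((t.factorial * (n+1) : ℕ):ℝ) ^ ((1:ℝ)/t) + ((t-1:ℕ):ℝ)) /
      ((t.factorial : ℝ) * n) ^ ((1:ℝ)/t)) atTop (nhds 1) := by
  have htpos : (0:ℝ) < (t:ℝ) := by positivity
  have hfac : (0:ℝ) < (t.factorial : ℝ) := by exact_mod_cast t.factorial_pos
  have hdenom : Tendsto (fun n : ℕ => ((t.factorial : ℝ) * n) ^ ((1:ℝ)/t)) atTop atTop := by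
    apply (tendsto_rpow_atTop (by positivity)).comp
    exact Tendsto.const_mul_atTop hfac tendsto_natCast_atTop_atTop
  have hg2 : Tendsto (fun n : ℕ => ((t-1:ℕ):ℝ) / ((t.factorial : ℝ) * n) ^ ((1:ℝ)/t))
      atTop (nhds 0) := tendsto_const_nhds.div_atTop hdenom
  have hr : Tendsto (fun n : ℕ => ((t.factorial : ℝ) * (n+1)) / ((t.factorial : ℝ) * n))
      atTop (nhds 1) := by
    have h1 : Tendsto (fun n : ℕ => 1 + 1/(n:ℝ)) atTop (nhds 1) := by
      have := tendsto_one_div_atTop_nhds_zero_nat (𝕜 := ℝ)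
      simpa using (tendsto_const_nhds (x := (1:ℝ))).add this
    apply h1.congr'
    filter_upwards [eventually_ge_atTop 1] with n hn
    have hn' : (0:ℝ) < (n:ℝ) := by exact_mod_cast hn
    field_simp
  have hg1 : Tendsto (fun n : ℕ => (((t.factorial * (n+1) : ℕ):ℝ) ^ ((1:ℝ)/t)) /
      ((t.factorial : ℝ) * n) ^ ((1:ℝ)/t)) atTop (nhds 1) := by
    have hcont : Tendsto (fun n : ℕ =>
        (((t.factorial : ℝ) * (n+1)) / ((t.factorial : ℝ) * n)) ^ ((1:ℝ)/t)) atTop (nhds 1) := by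
      have h2 := ((Real.continuousAt_rpow_const 1 ((1:ℝ)/t) (Or.inl one_ne_zero)).tendsto).comp hr
      simpa [Function.comp_def] using h2
    apply hcont.congr'
    filter_upwards [eventually_ge_atTop 1] with n hn
    rw [Real.div_rpow (by positivity) (by positivity)]
    congr 2
    push_cast
    ring
  have := hg1.add hg2
  simp only [add_zero] at this
  apply this.congr
  intro n
  rw [add_div]

theorem stmt17 (p : ℕ) (hp : p.Prime) (t k : ℕ) (ht : 1 ≤ t) (hk : 2 * t ≤ k)
    (α : Fin k → ZMod p)
    (hne : α ⟨t - 1, by omega⟩ ≠ α ⟨t, by omega⟩)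
    (hconst : ∀ i : Fin k, t ≤ i.1 → α i = α ⟨t, by omega⟩) :
    limsup (fun n : ℕ => (fMaxP p k n α : ℝ) /
      (((t.factorial : ℝ) * (n : ℝ)) ^ ((1 : ℝ) / (t : ℝ)))) atTop ≤ 1 := by
  haveI : Fact p.Prime := ⟨hp⟩
  have key : ∀ n, (fMaxP p k n α).choose t ≤ n + 1 := by
    intro n
    have hmem : fMaxP p k n α ∈
        {m | ∃ F : Finset (Finset (Fin n)), IsIntersectingP p k n α F ∧ F.card = m} := by
      apply Nat.sSup_mem
      · refine ⟨0, ∅, ?_, Finset.card_empty⟩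
        intro ℓ S hS hcard
        rw [Finset.subset_empty.mp hS] at hcard
        simp at hcard
      · refine ⟨t.factorial * (n + 1) + t, ?_⟩
        rintro m ⟨F, hF, rfl⟩
        exact aux_nat_bound t F.card n ht
          (aux_choose_card_le p k n t ht hk α hne hconst F hF)
    obtain ⟨F, hF, hcard⟩ := hmem
    rw [← hcard]
    exact aux_choose_card_le p k n t ht hk α hne hconst F hF
  set g : ℕ → ℝ := fun n => (((t.factorial * (n+1) : ℕ):ℝ) ^ ((1:ℝ)/t) + ((t-1:ℕ):ℝ)) /
      ((t.factorial : ℝ) * n) ^ ((1:ℝ)/t) with hgdef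
  have hg := aux_tendsto_bound t ht
  have hev : (fun n : ℕ => (fMaxP p k n α : ℝ) /
      (((t.factorial : ℝ) * (n : ℝ)) ^ ((1 : ℝ) / (t : ℝ)))) ≤ᶠ[atTop] g := by
    apply Eventually.of_forall
    intro n
    have hnum := aux_real_bound t (fMaxP p k n α) n ht (key n)
    have hden : (0:ℝ) ≤ ((t.factorial : ℝ) * n) ^ ((1:ℝ)/t) := by positivity
    simp only [hgdef]
    rcases eq_or_lt_of_le hden with h | h
    · rw [← h]
      simp
    · exact (div_le_div_iff_of_pos_right h).mpr hnum
  calc limsup (fun n : ℕ => (fMaxP p k n α : ℝ) /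
      (((t.factorial : ℝ) * (n : ℝ)) ^ ((1 : ℝ) / (t : ℝ)))) atTop
      ≤ limsup g atTop := by
        refine limsup_le_limsup hev ?_ ?_
        · exact isCoboundedUnder_le_of_le atTop (x := 0) fun n => by positivity
        · exact hg.isBoundedUnder_le
    _ = 1 := hg.limsup_eq
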